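/- For all positive reals x and y with x ≠ y, the logarithmic mean satisfies (x - y)/(log x - log y) ≤ ((√x + √y)/2)² ≤ (x + y)/2 ≤ max(x, y). -/

import Mathlib

open Real

private noncomputable def lmF : ℝ → ℝ := fun t => (t + 1) * Real.log t - 2 * (t - 1)

private lemma lmF_hasDeriv (t : ℝ) (ht : 0 < t) :
    HasDerivAt lmF (Real.log t + 1 / t - 1) t := by
  have h1 : HasDerivAt (fun u : ℝ => (u + 1) * Real.log u)
      (1 * Real.log t + (t + 1) * t⁻¹) t :=
    ((hasDerivAt_id t).add_const 1).mul (Real.hasDerivAt_log ht.ne')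
  have h2 : HasDerivAt (fun u : ℝ => 2 * (u - 1)) (2 * 1) t :=
    ((hasDerivAt_id t).sub_const 1).const_mul 2
  have := h1.sub h2
  refine this.congr_deriv ?_
  rw [add_mul, mul_inv_cancel₀ ht.ne']
  ring

private lemma aux_log (s : ℝ) (hs : 1 < s) : 2 * (s - 1) ≤ (s + 1) * Real.log s := by
  have hmono : MonotoneOn lmF (Set.Ici 1) := by
    apply monotoneOn_of_deriv_nonneg (convex_Ici 1)
    · intro t ht
      exact (lmF_hasDeriv t (lt_of_lt_of_le one_pos ht)).continuousAt.continuousWithinAt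
    · intro t ht
      rw [interior_Ici] at ht
      exact (lmF_hasDeriv t (lt_trans one_pos ht)).differentiableAt.differentiableWithinAt
    · intro t ht
      rw [interior_Ici] at ht
      have ht0 : 0 < t := lt_trans one_pos ht
      rw [(lmF_hasDeriv t ht0).deriv]
      have h := Real.log_le_sub_one_of_pos (show (0:ℝ) < 1 / t by positivity)
      rw [Real.log_div one_ne_zero ht0.ne'] at h
      simp only [Real.log_one] at h
      linarith
  have h1 : lmF 1 ≤ lmF s :=
    hmono (Set.self_mem_Ici) (Set.mem_Ici.mpr hs.le) hs.le
  simp only [lmF, Real.log_one] at h1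
  linarith

private lemma key (a b : ℝ) (hb : 0 < b) (hab : b < a) :
    (a ^ 2 - b ^ 2) / (2 * (Real.log a - Real.log b)) ≤ ((a + b) / 2) ^ 2 := by
  have ha : 0 < a := lt_trans hb hab
  have hlog : Real.log b < Real.log a := Real.log_lt_log hb hab
  have hs : 1 < a / b := (one_lt_div hb).mpr hab
  have h := aux_log (a / b) hs
  rw [Real.log_div ha.ne' hb.ne'] at h
  have h2 : 2 * (a - b) ≤ (a + b) * (Real.log a - Real.log b) := by
    have := mul_le_mul_of_nonneg_left h hb.le
    calc 2 * (a - b) = b * (2 * (a / b - 1)) := by field_simp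
      _ ≤ b * ((a / b + 1) * (Real.log a - Real.log b)) := this
      _ = (a + b) * (Real.log a - Real.log b) := by field_simp
  rw [div_le_iff₀ (by linarith)]
  nlinarith [hlog, hab, hb]

theorem log_mean_chain (x y : ℝ) (hx : 0 < x) (hy : 0 < y) (hxy : x ≠ y) :
    (x - y) / (Real.log x - Real.log y) ≤ ((Real.sqrt x + Real.sqrt y) / 2) ^ 2 ∧
    ((Real.sqrt x + Real.sqrt y) / 2) ^ 2 ≤ (x + y) / 2 ∧
    (x + y) / 2 ≤ max x y := by
  refine ⟨?_, ?_, ?_⟩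
  · -- first inequality; symmetric in x,y
    rcases lt_or_gt_of_ne hxy with h | h
    · -- x < y
      have hb : 0 < Real.sqrt x := Real.sqrt_pos.mpr hx
      have hab : Real.sqrt x < Real.sqrt y := Real.sqrt_lt_sqrt hx.le h
      have hk := key (Real.sqrt y) (Real.sqrt x) hb hab
      rw [Real.sq_sqrt hy.le, Real.sq_sqrt hx.le] at hk
      have hlx : Real.log y = 2 * Real.log (Real.sqrt y) := by
        rw [Real.log_sqrt hy.le]; ring
      have hly : Real.log x = 2 * Real.log (Real.sqrt x) := by
        rw [Real.log_sqrt hx.le]; ring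
      have : (x - y) / (Real.log x - Real.log y)
          = (y - x) / (2 * (Real.log (Real.sqrt y) - Real.log (Real.sqrt x))) := by
        rw [hlx, hly]
        rw [div_eq_div_iff]
        · ring
        · have : Real.log x < Real.log y := Real.log_lt_log hx h
          linarith
        · have : Real.log (Real.sqrt x) < Real.log (Real.sqrt y) :=
            Real.log_lt_log hb hab
          linarith
      rw [this, add_comm (Real.sqrt x)]
      exact hk
    · -- y < x
      have hb : 0 < Real.sqrt y := Real.sqrt_pos.mpr hy
      have hab : Real.sqrt y < Real.sqrt x := Real.sqrt_lt_sqrt hy.le h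
      have hk := key (Real.sqrt x) (Real.sqrt y) hb hab
      rw [Real.sq_sqrt hx.le, Real.sq_sqrt hy.le] at hk
      have hlx : Real.log x = 2 * Real.log (Real.sqrt x) := by
        rw [Real.log_sqrt hx.le]; ring
      have hly : Real.log y = 2 * Real.log (Real.sqrt y) := by
        rw [Real.log_sqrt hy.le]; ring
      have heq : (x - y) / (Real.log x - Real.log y)
          = (x - y) / (2 * (Real.log (Real.sqrt x) - Real.log (Real.sqrt y))) := by
        rw [hlx, hly]; ring_nf
      rw [heq]
      exact hk
  · have h := sq_nonneg (Real.sqrt x - Real.sqrt y)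
    have hx2 := Real.sq_sqrt hx.le
    have hy2 := Real.sq_sqrt hy.le
    nlinarith
  · rcases le_total x y with h | h
    · rw [max_eq_right h]; linarith
    · rw [max_eq_left h]; linarith
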